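/- If a graph G is regular and its vertex set can be partitioned into two maximum j-independent sets, then c_j(G) = α_j(G) = a_j(G) = n(G)/2. -/

import Mathlib

open Finset

namespace DSI

variable {V : Type*} (G : SimpleGraph V) [Fintype V] [DecidableEq V] [DecidableRel G.Adj]

/-- The degree sequence of `G`, sorted in non-decreasing order. -/
def dseq : List ℕ := (Finset.univ.val.map (fun v => G.degree v)).sort (· ≤ ·)

/-- The sum of the `k` smallest degrees, `Σ_{i=1}^k d_i`. -/
def sumSmallest (k : ℕ) : ℕ := ((dseq G).take k).sum

/-- The sum of the `k` largest degrees, `Σ_{i=1}^k d_{n-i+1}`. -/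
def sumLargest (k : ℕ) : ℕ := ((dseq G).reverse.take k).sum

/-- The number of edges `m(G)`. -/
def esize : ℕ := G.edgeFinset.card

/-- `m[S]`: the number of edges of the subgraph induced by `S`. -/
def mOn (S : Finset V) : ℕ := (S.sym2.filter (fun e => e ∈ G.edgeSet)).card

/-- A set `I` is `j`-independent if every vertex of `I` has fewer than `j` neighbours in `I`,
i.e. the induced subgraph has maximum degree `< j`. -/
def JIndep (j : ℕ) (I : Finset V) : Prop := ∀ v ∈ I, (I.filter (G.Adj v)).card < j

/-- The `j`-independence number `α_j(G)`. -/
noncomputable def alphaJ (j : ℕ) : ℕ := sSup {k | ∃ I : Finset V, JIndep G j I ∧ I.card = k}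

/-- The family `F` of maximum `j`-independent sets. -/
noncomputable def maxJIndep (j : ℕ) : Set (Finset V) :=
  {S | JIndep G j S ∧ S.card = alphaJ G j}

/-- `max_{S ∈ F} (m[V−S] − m[S])`. -/
noncomputable def fU (j : ℕ) : ℤ :=
  sSup ((fun S : Finset V => (mOn G Sᶜ : ℤ) - (mOn G S : ℤ)) '' maxJIndep G j)

/-- `min_{S ∈ F} (m[V−S] − m[S])`. -/
noncomputable def fL (j : ℕ) : ℤ :=
  sInf ((fun S : Finset V => (mOn G Sᶜ : ℤ) - (mOn G S : ℤ)) '' maxJIndep G j)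

/-- The upper `j`-annihilation number `a_j(G)`. -/
noncomputable def aJ (j : ℕ) : ℕ :=
  sSup {k | k ≤ Fintype.card V ∧ (sumSmallest G k : ℤ) + fU G j ≤ (esize G : ℤ)}

/-- The lower `j`-annihilation number `c_j(G)`. -/
noncomputable def cJ (j : ℕ) : ℕ :=
  sInf {k | k ≤ Fintype.card V ∧ (esize G : ℤ) ≤ (sumLargest G k : ℤ) + fL G j}

/-- The annihilation number `a(G)`. -/
noncomputable def annihilation : ℕ :=
  sSup {k | k ≤ Fintype.card V ∧ sumSmallest G k ≤ esize G}

/-- An independent set. -/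
def IndepSet (I : Finset V) : Prop := ∀ v ∈ I, ∀ w ∈ I, ¬ G.Adj v w

/-- The independence number `α(G)`. -/
noncomputable def alpha : ℕ := sSup {k | ∃ I : Finset V, IndepSet G I ∧ I.card = k}

end DSI

section Helpers
variable {V : Type*} (G : SimpleGraph V) [Fintype V] [DecidableEq V] [DecidableRel G.Adj]

def indG (S : Finset V) : SimpleGraph V where
  Adj v w := G.Adj v w ∧ v ∈ S ∧ w ∈ S
  symm := ⟨fun _ _ h => ⟨h.1.symm, h.2.2, h.2.1⟩⟩
  loopless := ⟨fun v h => G.loopless.irrefl v h.1⟩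

instance (S : Finset V) : DecidableRel (indG G S).Adj := fun _ _ => instDecidableAnd

lemma indG_edgeFinset (S : Finset V) :
    (indG G S).edgeFinset = S.sym2.filter (fun e => e ∈ G.edgeSet) := by
  ext e
  induction e using Sym2.ind with
  | _ a b =>
    rw [SimpleGraph.mem_edgeFinset]
    simp only [SimpleGraph.mem_edgeFinset, SimpleGraph.mem_edgeSet, indG, Finset.mem_filter,
      Finset.mem_sym2_iff, Sym2.mem_iff]
    constructor
    · rintro ⟨h, ha, hb⟩
      exact ⟨fun y hy => by rcases hy with rfl | rfl <;> assumption, h⟩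
    · rintro ⟨h, hadj⟩
      exact ⟨hadj, h a (Or.inl rfl), h b (Or.inr rfl)⟩

lemma handshake_induced (S : Finset V) :
    ∑ v ∈ S, ((S.filter (G.Adj v)).card) = 2 * DSI.mOn G S := by
  rw [DSI.mOn, ← indG_edgeFinset, ← SimpleGraph.sum_degrees_eq_twice_card_edges]
  rw [← Finset.sum_subset (Finset.subset_univ S)]
  · apply Finset.sum_congr rfl
    intro v hv
    rw [SimpleGraph.degree, SimpleGraph.neighborFinset_eq_filter]
    congr 1
    ext w
    rw [Finset.mem_filter, Finset.mem_filter]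
    simp only [Finset.mem_filter, Finset.mem_univ, true_and, indG]
    tauto
  · intro v _ hv
    rw [SimpleGraph.degree, SimpleGraph.neighborFinset_eq_filter]
    simp only [Finset.card_eq_zero, Finset.filter_eq_empty_iff]
    intro w _
    simp only [indG]
    tauto

lemma cross_symm (S T : Finset V) :
    ∑ v ∈ S, (T.filter (G.Adj v)).card = ∑ w ∈ T, (S.filter (G.Adj w)).card := by
  simp only [Finset.card_filter]
  rw [Finset.sum_comm]
  apply Finset.sum_congr rfl; intro w _; apply Finset.sum_congr rfl; intro v _
  simp [G.adj_comm]

lemma degree_split (S : Finset V) (v : V) :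
    G.degree v = (S.filter (G.Adj v)).card + (Sᶜ.filter (G.Adj v)).card := by
  rw [SimpleGraph.degree, SimpleGraph.neighborFinset_eq_filter, ← Finset.union_compl S,
    Finset.filter_union, Finset.card_union_of_disjoint]
  exact Finset.disjoint_filter_filter (disjoint_compl_right)

lemma mOn_compl_eq {r : ℕ} (hreg : G.IsRegularOfDegree r) (S : Finset V)
    (hcard : Sᶜ.card = S.card) : DSI.mOn G Sᶜ = DSI.mOn G S := by
  have h1 : ∑ v ∈ S, G.degree v = 2 * DSI.mOn G S + ∑ v ∈ S, (Sᶜ.filter (G.Adj v)).card := by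
    rw [← handshake_induced]
    rw [← Finset.sum_add_distrib]
    exact Finset.sum_congr rfl fun v _ => degree_split G S v
  have h2 : ∑ v ∈ Sᶜ, G.degree v
      = 2 * DSI.mOn G Sᶜ + ∑ v ∈ S, (Sᶜ.filter (G.Adj v)).card := by
    rw [← handshake_induced, cross_symm G S Sᶜ]
    rw [← Finset.sum_add_distrib]
    refine Finset.sum_congr rfl fun v _ => ?_
    simpa [compl_compl] using degree_split G Sᶜ v
  have hs1 : ∑ v ∈ S, G.degree v = S.card * r := by
    rw [Finset.sum_congr rfl fun v _ => hreg v]; simp [mul_comm]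
  have hs2 : ∑ v ∈ Sᶜ, G.degree v = Sᶜ.card * r := by
    rw [Finset.sum_congr rfl fun v _ => hreg v]; simp [mul_comm]
  rw [hs1] at h1; rw [hs2, hcard] at h2
  omega

lemma dseq_replicate {r : ℕ} (hreg : G.IsRegularOfDegree r) :
    DSI.dseq G = List.replicate (Fintype.card V) r := by
  rw [DSI.dseq]
  have hmap : (Finset.univ.val.map (fun v => G.degree v))
      = Multiset.replicate (Fintype.card V) r := by
    rw [show (fun v : V => G.degree v) = (fun _ : V => r) from funext hreg,
      Multiset.map_const', Finset.card_val, Finset.card_univ]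
  rw [hmap, ← Multiset.coe_replicate]
  have := Multiset.sort_eq (α := ℕ) ↑(List.replicate (Fintype.card V) r) (· ≤ ·)
  rw [Multiset.coe_eq_coe] at this
  exact List.perm_replicate.mp this

end Helpers

theorem regular_partition_eq {V : Type*} (G : SimpleGraph V) [Fintype V]
    [DecidableEq V] [DecidableRel G.Adj] (j : ℕ) (hj : 1 ≤ j)
    (hreg : ∃ r, G.IsRegularOfDegree r)
    (hpart : ∃ A B : Finset V, A ∈ DSI.maxJIndep G j ∧ B ∈ DSI.maxJIndep G j ∧
      Disjoint A B ∧ A ∪ B = Finset.univ) :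
    DSI.cJ G j = DSI.alphaJ G j ∧ DSI.alphaJ G j = DSI.aJ G j ∧
      2 * DSI.alphaJ G j = Fintype.card V := by
  obtain ⟨r, hreg⟩ := hreg
  obtain ⟨A, B, hA, hB, hdisj, hunion⟩ := hpart
  set n := Fintype.card V with hn
  set α := DSI.alphaJ G j with halpha
  have h2α : 2 * α = n := by
    have h := Finset.card_union_of_disjoint hdisj
    rw [hunion, Finset.card_univ] at h
    have hcA : A.card = α := hA.2
    have hcB : B.card = α := hB.2
    omega
  have hαn : α ≤ n := by omega
  have hr0 : r = 0 → n = 0 := by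
    intro h0
    have huniv : DSI.JIndep G j Finset.univ := by
      intro v _
      have : (Finset.univ.filter (G.Adj v)).card = G.degree v := by
        rw [SimpleGraph.degree, SimpleGraph.neighborFinset_eq_filter]
      rw [this, hreg v, h0]
      omega
    have hbdd : BddAbove {k | ∃ I : Finset V, DSI.JIndep G j I ∧ I.card = k} :=
      ⟨n, fun k hk => by obtain ⟨I, _, hI⟩ := hk; exact hI ▸ Finset.card_le_univ I⟩
    have hle : n ≤ α := le_csSup hbdd ⟨Finset.univ, huniv, Finset.card_univ⟩
    omega
  have hmOn : ∀ S ∈ DSI.maxJIndep G j, DSI.mOn G Sᶜ = DSI.mOn G S := by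
    intro S hS
    apply mOn_compl_eq G hreg
    rw [Finset.card_compl, hS.2, ← hn, ← halpha]
    omega
  have himg : ((fun S : Finset V => (DSI.mOn G Sᶜ : ℤ) - (DSI.mOn G S : ℤ)) ''
      DSI.maxJIndep G j) = {0} := by
    ext z
    simp only [Set.mem_image, Set.mem_singleton_iff]
    constructor
    · rintro ⟨S, hS, rfl⟩; rw [hmOn S hS]; simp
    · rintro rfl; exact ⟨A, hA, by rw [hmOn A hA]; simp⟩
  have hfU : DSI.fU G j = 0 := by rw [DSI.fU, himg, csSup_singleton]
  have hfL : DSI.fL G j = 0 := by rw [DSI.fL, himg, csInf_singleton]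
  have hesize : DSI.esize G = α * r := by
    have h := SimpleGraph.sum_degrees_eq_twice_card_edges G
    have hsum : ∑ v : V, G.degree v = n * r := by
      rw [Finset.sum_congr rfl fun v _ => hreg v]; simp [mul_comm, hn]
    have h2 : 2 * DSI.esize G = n * r := by rw [DSI.esize, ← h]; exact hsum
    have h3 : n * r = 2 * (α * r) := by rw [← h2α]; ring
    omega
  have hdseq := dseq_replicate G hreg
  have hsmall : ∀ k, k ≤ n → DSI.sumSmallest G k = k * r := by
    intro k hk
    rw [DSI.sumSmallest, hdseq, List.take_replicate]
    simp [Nat.min_eq_left hk, mul_comm]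
    exact Or.inl hk
  have hlarge : ∀ k, k ≤ n → DSI.sumLargest G k = k * r := by
    intro k hk
    rw [DSI.sumLargest, hdseq, List.reverse_replicate, List.take_replicate]
    simp [Nat.min_eq_left hk, mul_comm]
    exact Or.inl hk
  have haJ : DSI.aJ G j = α := by
    rw [DSI.aJ]
    have hset : {k | k ≤ n ∧ (DSI.sumSmallest G k : ℤ) + DSI.fU G j ≤ (DSI.esize G : ℤ)}
        = Set.Iic α := by
      ext k
      simp only [Set.mem_setOf_eq, Set.mem_Iic, hfU, add_zero, hesize]
      constructor
      · rintro ⟨hkn, hle⟩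
        rw [hsmall k hkn] at hle
        have hle' : k * r ≤ α * r := by exact_mod_cast hle
        rcases Nat.eq_zero_or_pos r with h0 | hpos
        · have := hr0 h0; omega
        · exact Nat.le_of_mul_le_mul_right hle' hpos
      · intro hk
        have hkn : k ≤ n := le_trans hk hαn
        refine ⟨hkn, ?_⟩
        rw [hsmall k hkn]
        exact_mod_cast mul_le_mul_left hk r
    rw [hset, csSup_Iic]
  have hcJ : DSI.cJ G j = α := by
    rw [DSI.cJ]
    have hset : {k | k ≤ n ∧ (DSI.esize G : ℤ) ≤ (DSI.sumLargest G k : ℤ) + DSI.fL G j}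
        = Set.Icc α n := by
      ext k
      simp only [Set.mem_setOf_eq, Set.mem_Icc, hfL, add_zero, hesize]
      constructor
      · rintro ⟨hkn, hle⟩
        rw [hlarge k hkn] at hle
        have hle' : α * r ≤ k * r := by exact_mod_cast hle
        refine ⟨?_, hkn⟩
        rcases Nat.eq_zero_or_pos r with h0 | hpos
        · have := hr0 h0; omega
        · exact Nat.le_of_mul_le_mul_right hle' hpos
      · rintro ⟨hαk, hkn⟩
        refine ⟨hkn, ?_⟩
        rw [hlarge k hkn]
        exact_mod_cast mul_le_mul_left hαk r
    rw [hset, csInf_Icc hαn]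
  exact ⟨hcJ, haJ.symm, h2α⟩
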